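/- As μ → ∞, the minimal value (μ/2) (δdʳ)ᵀ (G Gᵀ + μ I)⁻¹ δdʳ of the penalty objective converges to the classical FWI misfit ½‖δdʳ‖₂²; that is, the extended FWI objective reduces to the reduced FWI objective in the limit μ → ∞. -/

import Mathlib

open Matrix

private lemma aux_psd_smul {M : ℕ} {A : Matrix (Fin M) (Fin M) ℝ}
    (hA : A.PosSemidef) {t : ℝ} (ht : 0 ≤ t) : (t • A).PosSemidef := by
  have hh : (t • A).IsHermitian := by
    rw [Matrix.IsHermitian, Matrix.conjTranspose_smul, star_trivial, hA.1.eq]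
  refine ⟨hh, fun x => ?_⟩
  exact (hA.smul ht).2 x

private lemma aux_posdef {M : ℕ} {A : Matrix (Fin M) (Fin M) ℝ}
    (hA : A.PosSemidef) {t : ℝ} (ht : 0 ≤ t) :
    (t • A + (1 : Matrix (Fin M) (Fin M) ℝ)).PosDef :=
  Matrix.PosDef.posSemidef_add (aux_psd_smul hA ht) Matrix.PosDef.one

/-- As `μ → ∞`, the minimal value `(μ/2) (δdʳ)ᵀ (G Gᵀ + μ I)⁻¹ δdʳ` of the penalty
objective converges to the classical FWI misfit `½‖δdʳ‖₂²`. -/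
theorem stmt_12 (N M : ℕ) (_hN : 0 < N) (_hM : 0 < M)
    (G : Matrix (Fin M) (Fin N) ℝ) (δdr : Fin M → ℝ) :
    Filter.Tendsto
      (fun μ : ℝ =>
        (μ/2) * (δdr ⬝ᵥ (G * Gᵀ + μ • (1 : Matrix (Fin M) (Fin M) ℝ))⁻¹.mulVec δdr))
      Filter.atTop (nhds ((1/2) * (δdr ⬝ᵥ δdr))) := by
  set A : Matrix (Fin M) (Fin M) ℝ := G * Gᵀ with hAdef
  have hApsd : A.PosSemidef := by
    have := Matrix.posSemidef_self_mul_conjTranspose G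
    simpa [hAdef, Matrix.conjTranspose_eq_transpose_of_trivial] using this
  set f : ℝ → ℝ :=
    fun t => (1/2) * (δdr ⬝ᵥ ((t • A + 1)⁻¹.mulVec δdr)) with hfdef
  -- continuity of f at 0
  have hcont : ContinuousAt f 0 := by
    have hmat : Continuous fun t : ℝ => t • A + (1 : Matrix (Fin M) (Fin M) ℝ) := by
      continuity
    have hinv : ContinuousAt Inv.inv
        ((fun t : ℝ => t • A + (1 : Matrix (Fin M) (Fin M) ℝ)) 0) := by
      refine continuousAt_matrix_inv _ ?_
      show ContinuousAt Ring.inverse (((0 : ℝ) • A + 1 : Matrix (Fin M) (Fin M) ℝ)).det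
      rw [show ((0 : ℝ) • A + (1 : Matrix (Fin M) (Fin M) ℝ)) = 1 by simp]
      have : (1 : Matrix (Fin M) (Fin M) ℝ).det = ((1 : ℝˣ) : ℝ) := by simp
      rw [this]
      exact NormedRing.inverse_continuousAt (1 : ℝˣ)
    have h1 : ContinuousAt (fun t : ℝ => (t • A + 1)⁻¹) 0 :=
      ContinuousAt.comp (f := fun t : ℝ => t • A + 1) (x := (0 : ℝ)) hinv
        hmat.continuousAt
    have hdp : Continuous (fun B : Matrix (Fin M) (Fin M) ℝ => δdr ⬝ᵥ B.mulVec δdr) :=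
      continuous_const.dotProduct (continuous_id.matrix_mulVec continuous_const)
    have h2 : ContinuousAt (fun t : ℝ => δdr ⬝ᵥ ((t • A + 1)⁻¹.mulVec δdr)) 0 :=
      hdp.continuousAt.comp h1
    exact continuousAt_const.mul h2
  have hf0 : f 0 = (1/2) * (δdr ⬝ᵥ δdr) := by
    simp [hfdef]
  -- tendsto of f ∘ inv
  have htend : Filter.Tendsto (fun μ : ℝ => f μ⁻¹) Filter.atTop (nhds ((1/2) * (δdr ⬝ᵥ δdr))) := by
    rw [← hf0]
    exact hcont.tendsto.comp tendsto_inv_atTop_zero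
  refine htend.congr' ?_
  filter_upwards [Filter.eventually_gt_atTop (0 : ℝ)] with μ hμ
  have hμ0 : μ ≠ 0 := ne_of_gt hμ
  have hinv0 : (0 : ℝ) ≤ μ⁻¹ := le_of_lt (inv_pos.mpr hμ)
  have hpd : (μ⁻¹ • A + (1 : Matrix (Fin M) (Fin M) ℝ)).PosDef := aux_posdef hApsd hinv0
  have hunit : IsUnit (μ⁻¹ • A + (1 : Matrix (Fin M) (Fin M) ℝ)).det :=
    hpd.det_pos.ne'.isUnit
  have hfac : A + μ • (1 : Matrix (Fin M) (Fin M) ℝ)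
      = μ • (μ⁻¹ • A + (1 : Matrix (Fin M) (Fin M) ℝ)) := by
    rw [smul_add, smul_smul, mul_inv_cancel₀ hμ0, one_smul]
  have hμu : IsUnit μ := isUnit_iff_ne_zero.mpr hμ0
  have hsmul_inv : (μ • (μ⁻¹ • A + (1 : Matrix (Fin M) (Fin M) ℝ)))⁻¹
      = μ⁻¹ • (μ⁻¹ • A + (1 : Matrix (Fin M) (Fin M) ℝ))⁻¹ := by
    obtain ⟨u, hu⟩ := hμu
    subst hu
    rw [← Units.smul_def, Matrix.inv_smul' _ u hunit, Units.smul_def,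
      Units.val_inv_eq_inv_val]
  have hGA : G * Gᵀ + μ • (1 : Matrix (Fin M) (Fin M) ℝ)
      = μ • (μ⁻¹ • A + (1 : Matrix (Fin M) (Fin M) ℝ)) := by
    rw [← hAdef, hfac]
  show f μ⁻¹ = (μ/2) * (δdr ⬝ᵥ (G * Gᵀ + μ • (1 : Matrix (Fin M) (Fin M) ℝ))⁻¹.mulVec δdr)
  rw [hGA, hsmul_inv, hfdef]
  rw [smul_mulVec, dotProduct_smul, smul_eq_mul]
  field_simp
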